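/- arXiv:2406.13691 — 2 statements merged into one kernel-verified Lean document; each statement's English description precedes it below -/
import Mathlib

section
/- Let G, H be symmetric positive definite J×J matrices such that G - H and G + (n-1)H are positive definite, and let Σ = Iₙ ⊗ (G - H) + 1_{n,n} ⊗ H. Then log det(Σ) = (n-1)·log det(G - H) + log det(G + (n-1)H). -/
open Kronecker

theorem stmt_6 (n J : ℕ) (hn : 1 ≤ n)
    (G H : Matrix (Fin J) (Fin J) ℝ) (hG : G.PosDef) (hH : H.IsSymm)
    (hGH : (G - H).PosDef) (hGH' : (G + ((n : ℝ) - 1) • H).PosDef)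
    (Sg : Matrix (Fin n × Fin J) (Fin n × Fin J) ℝ)
    (hSg : Sg = (1 : Matrix (Fin n) (Fin n) ℝ) ⊗ₖ (G - H) +
        (Matrix.of fun _ _ => (1 : ℝ) : Matrix (Fin n) (Fin n) ℝ) ⊗ₖ H) :
    Real.log Sg.det =
      ((n : ℝ) - 1) * Real.log (G - H).det +
        Real.log (G + ((n : ℝ) - 1) • H).det := by
  set A := G - H with hA
  set B := G + ((n : ℝ) - 1) • H with hB
  -- key algebraic facts
  have hAdet : IsUnit A.det := isUnit_iff_ne_zero.mpr hGH.det_pos.ne'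
  have hAinv : A * A⁻¹ = 1 := Matrix.mul_nonsing_inv A hAdet
  have hAinv' : A⁻¹ * A = 1 := Matrix.nonsing_inv_mul A hAdet
  -- B = A + n • H
  have hBA : B = A + (n : ℝ) • H := by
    rw [hA, hB]
    rw [sub_smul, one_smul]
    abel
  -- rank factorization of the all-ones Kronecker term
  set U : Matrix (Fin n × Fin J) (Fin J) ℝ := Matrix.of fun p k => H p.2 k with hU
  set V : Matrix (Fin J) (Fin n × Fin J) ℝ :=
    Matrix.of fun k q => if k = q.2 then (1 : ℝ) else 0 with hV
  have hUV : (Matrix.of fun _ _ => (1 : ℝ) : Matrix (Fin n) (Fin n) ℝ) ⊗ₖ H = U * V := by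
    ext p q
    simp only [Matrix.mul_apply, hU, hV, Matrix.of_apply, Matrix.kroneckerMap_apply,
      mul_ite, mul_one, mul_zero]
    rw [Finset.sum_ite_eq' Finset.univ q.2 (fun k => H p.2 k)]
    simp
  -- factor Sg
  have hfact : Sg = ((1 : Matrix (Fin n) (Fin n) ℝ) ⊗ₖ A) *
      (1 + ((1 : Matrix (Fin n) (Fin n) ℝ) ⊗ₖ A⁻¹ * U) * V) := by
    rw [hSg, hUV, Matrix.mul_add, Matrix.mul_one, ← Matrix.mul_assoc, ← Matrix.mul_assoc,
      ← Matrix.mul_kronecker_mul, Matrix.one_mul, hAinv, Matrix.one_kronecker_one,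
      Matrix.one_mul]
  -- the small-matrix product
  have hsmall : V * ((1 : Matrix (Fin n) (Fin n) ℝ) ⊗ₖ A⁻¹ * U) = (n : ℝ) • (A⁻¹ * H) := by
    have hmid : ∀ (q : Fin n × Fin J) (l : Fin J),
        ((1 : Matrix (Fin n) (Fin n) ℝ) ⊗ₖ A⁻¹ * U) q l = (A⁻¹ * H) q.2 l := by
      intro q l
      rw [Matrix.mul_apply]
      rw [show (Finset.univ : Finset (Fin n × Fin J)) = Finset.univ ×ˢ Finset.univ from rfl]
      rw [Finset.sum_product]
      simp only [Matrix.kroneckerMap_apply, hU, Matrix.of_apply, Matrix.one_apply]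
      rw [Finset.sum_comm]
      simp only [ite_mul, one_mul, zero_mul]
      rw [Matrix.mul_apply]
      refine Finset.sum_congr rfl fun k _ => ?_
      simp
    ext k l
    rw [Matrix.mul_apply]
    simp only [hmid, hV, Matrix.of_apply, ite_mul, one_mul, zero_mul]
    rw [show (Finset.univ : Finset (Fin n × Fin J)) = Finset.univ ×ˢ Finset.univ from rfl]
    rw [Finset.sum_product]
    simp [Finset.sum_ite_eq' Finset.univ k (fun _ => (A⁻¹ * H) k l), Finset.sum_const,
      Matrix.smul_apply, mul_comm]
  -- compute the determinant
  have hdet1 : (1 + (n : ℝ) • (A⁻¹ * H) : Matrix (Fin J) (Fin J) ℝ) = A⁻¹ * B := by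
    rw [hBA, Matrix.mul_add, hAinv', Matrix.mul_smul]
  have hdetSg : Sg.det = A.det ^ (n - 1) * B.det := by
    rw [hfact, Matrix.det_mul, Matrix.det_kronecker, Matrix.det_one, one_pow,
      Matrix.det_one_add_mul_comm, hsmall, hdet1, Matrix.det_mul,
      Matrix.det_nonsing_inv, Fintype.card_fin, Ring.inverse_eq_inv']
    have : A.det ^ n = A.det ^ (n - 1) * A.det := by
      conv_lhs => rw [show n = (n - 1) + 1 from (Nat.succ_pred_eq_of_pos hn).symm]
      rw [pow_succ]
    rw [this]
    field_simp [hGH.det_pos.ne']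
  -- take logs
  have hApos : 0 < A.det := hGH.det_pos
  have hBpos : 0 < B.det := hGH'.det_pos
  rw [hdetSg, Real.log_mul (by positivity) hBpos.ne', Real.log_pow]
  rw [Nat.cast_sub hn, Nat.cast_one]
end

section
/- Let n ≥ 2 and Kη(t̃,t), Σ₀⁻¹, Kμ(t,t̃), Σ₁⁻¹ be matrices of compatible sizes. Then ((n/(n-1)) Iₙ ⊗ E - (1/(n-1)) 1_{n,n} ⊗ E)(Iₙ ⊗ F + (1/n) 1_{n,n} ⊗ (G - F))(1ₙ ⊗ M) = 0, where E = Kη(t̃,t), F = Σ₀⁻¹, G = Σ₁⁻¹, M = Kμ(t,t̃). In words: the product of the centered Kronecker block matrix, the block-structured inverse, and a column-replicated matrix vanishes. -/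
open Kronecker

theorem stmt_18 (n p J q : ℕ) (hn : 2 ≤ n)
    (E : Matrix (Fin p) (Fin J) ℝ) (F G : Matrix (Fin J) (Fin J) ℝ)
    (M : Matrix (Fin J) (Fin q) ℝ) :
    (((n : ℝ) / ((n : ℝ) - 1)) • ((1 : Matrix (Fin n) (Fin n) ℝ) ⊗ₖ E) -
        (1 / ((n : ℝ) - 1)) • ((Matrix.of fun _ _ => (1 : ℝ) : Matrix (Fin n) (Fin n) ℝ) ⊗ₖ E)) *
      ((1 : Matrix (Fin n) (Fin n) ℝ) ⊗ₖ F +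
        ((1 : ℝ) / n) • ((Matrix.of fun _ _ => (1 : ℝ) : Matrix (Fin n) (Fin n) ℝ) ⊗ₖ (G - F))) *
      ((Matrix.of fun (_ : Fin n) (_ : Fin 1) => (1 : ℝ)) ⊗ₖ M) = 0 := by
  have hn2 : (2:ℝ) ≤ (n:ℝ) := by exact_mod_cast hn
  have hn0 : (n:ℝ) ≠ 0 := by linarith
  set Jm : Matrix (Fin n) (Fin n) ℝ := Matrix.of fun _ _ => (1:ℝ) with hJm
  set u : Matrix (Fin n) (Fin 1) ℝ := Matrix.of fun _ _ => (1:ℝ) with hu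
  have h1 : Jm * u = (n:ℝ) • u := by
    ext i j
    simp [hJm, hu, Matrix.mul_apply]
  have key2 : ((1 : Matrix (Fin n) (Fin n) ℝ) ⊗ₖ F + ((1:ℝ)/n) • (Jm ⊗ₖ (G - F))) *
      (u ⊗ₖ M) = u ⊗ₖ (G * M) := by
    rw [Matrix.add_mul, Matrix.smul_mul, ← Matrix.mul_kronecker_mul, ← Matrix.mul_kronecker_mul,
      Matrix.one_mul, h1, Matrix.smul_kronecker, smul_smul, one_div,
      inv_mul_cancel₀ hn0, one_smul, ← Matrix.kronecker_add, Matrix.sub_mul,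
      add_sub_cancel]
  rw [Matrix.mul_assoc, key2, Matrix.sub_mul, Matrix.smul_mul, Matrix.smul_mul,
    ← Matrix.mul_kronecker_mul, ← Matrix.mul_kronecker_mul, Matrix.one_mul, h1,
    Matrix.smul_kronecker, smul_smul, ← sub_smul]
  have : ((n:ℝ) / ((n:ℝ) - 1) - 1 / ((n:ℝ) - 1) * (n:ℝ)) = 0 := by
    field_simp
    simp
  rw [this, zero_smul]
end
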